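/- Let n ≥ 2 and let σ = [v₀v₁…vₙ] be an n-simplex in a Euclidean space with facets τ₀,…,τₙ (τᵢ opposite vᵢ). Let u be a point of σ (i.e., of the convex hull of v₀,…,vₙ). Then at most one of the n+1 cones u∗τ₀,…,u∗τₙ is an n-well-centered n-simplex; precisely, for any two distinct indices i ≠ j such that u lies in neither the affine span of τᵢ nor the affine span of τⱼ (so that both u∗τᵢ and u∗τⱼ are nondegenerate n-simplices), it is not the case that both u∗τᵢ and u∗τⱼ are n-well-centered. -/

import Mathlib

open scoped RealInnerProductSpace
open Finset

variable {E : Type*} [NormedAddCommGroup E] [InnerProductSpace ℝ E]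

/-- A simplex is well-centered if its circumcenter is a strictly positive affine
combination of its vertices. -/
def Affine.Simplex.IsWellCentered {n : ℕ} (s : Affine.Simplex ℝ E n) : Prop :=
  ∃ w : Fin (n + 1) → ℝ, (∑ i, w i) = 1 ∧ (∀ i, 0 < w i) ∧
    Finset.univ.affineCombination ℝ s.points w = s.circumcenter

/-- The facet of a simplex opposite the vertex `i`. -/
def Affine.Simplex.facetOpposite {n : ℕ} (s : Affine.Simplex ℝ E (n + 1))
    (i : Fin (n + 2)) : Affine.Simplex ℝ E n :=
  s.face (fs := {i}ᶜ) (by simp [Finset.card_compl])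

open EuclideanGeometry in
/-- Orthogonal projections onto equal affine subspaces agree. -/
lemma proj_congr {S1 S2 : AffineSubspace ℝ E} [Nonempty S1] [Nonempty S2]
    [S1.direction.HasOrthogonalProjection] [S2.direction.HasOrthogonalProjection]
    (h : S1 = S2) (x : E) :
    (↑(EuclideanGeometry.orthogonalProjection S1 x) : E)
      = ↑(EuclideanGeometry.orthogonalProjection S2 x) := by
  subst h; rfl

lemma sum_smul_sub_eq {ι : Type*} (S : Finset ι) (P : ι → E) (ω : ι → ℝ) (o : E)
    (hsum : ∑ k ∈ S, ω k = 1) :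
    (∑ k ∈ S, ω k • P k) - o = ∑ k ∈ S, ω k • (P k - o) := by
  simp only [smul_sub, Finset.sum_sub_distrib, ← Finset.sum_smul, hsum, one_smul]

/-- A convex combination (with positive weights) of points on a sphere, at least two of which
are distinct, lies strictly inside the sphere. -/
lemma norm_sum_smul_sub_lt {ι : Type*} {S : Finset ι} {P : ι → E} {ω : ι → ℝ} {o : E} {r : ℝ}
    (hω : ∀ k ∈ S, 0 < ω k) (hsum : ∑ k ∈ S, ω k = 1)
    (hd : ∀ k ∈ S, dist (P k) o = r)
    {k₁ k₂ : ι} (hk₁ : k₁ ∈ S) (hk₂ : k₂ ∈ S) (hne : P k₁ ≠ P k₂) :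
    ‖(∑ k ∈ S, ω k • P k) - o‖ < r := by
  set w : E := (∑ k ∈ S, ω k • P k) - o with hw
  have hwsum : w = ∑ k ∈ S, ω k • (P k - o) := sum_smul_sub_eq S P ω o hsum
  have hr0 : 0 ≤ r := by rw [← hd k₁ hk₁]; exact dist_nonneg
  -- variance identity
  have hnorm : ∀ k ∈ S, ‖P k - o‖ = r := by
    intro k hk; rw [← hd k hk, dist_eq_norm]
  have hinner : ⟪w, w⟫ = ∑ k ∈ S, ω k * ⟪P k - o, w⟫ := by
    conv_lhs => rw [hwsum]
    rw [sum_inner, ← hwsum]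
    simp [real_inner_smul_left]
  have hvar : ∑ k ∈ S, ω k * ‖(P k - o) - w‖ ^ 2 = r ^ 2 - ‖w‖ ^ 2 := by
    have expand : ∀ k ∈ S, ω k * ‖(P k - o) - w‖ ^ 2
        = ω k * (r ^ 2 - 2 * ⟪P k - o, w⟫ + ‖w‖ ^ 2) := by
      intro k hk
      rw [← hnorm k hk]
      congr 1
      rw [norm_sub_sq_real]
    rw [Finset.sum_congr rfl expand]
    have step : ∀ k ∈ S, ω k * (r ^ 2 - 2 * ⟪P k - o, w⟫ + ‖w‖ ^ 2)
        = ω k * (r ^ 2 + ‖w‖ ^ 2) - 2 * (ω k * ⟪P k - o, w⟫) := fun k _ => by ring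
    rw [Finset.sum_congr rfl step, Finset.sum_sub_distrib, ← Finset.sum_mul, ← Finset.mul_sum,
      hsum, ← hinner, real_inner_self_eq_norm_sq]
    ring
  have hpos : 0 < ∑ k ∈ S, ω k * ‖(P k - o) - w‖ ^ 2 := by
    have hterm : ∀ k ∈ S, 0 ≤ ω k * ‖(P k - o) - w‖ ^ 2 := fun k hk =>
      mul_nonneg (le_of_lt (hω k hk)) (sq_nonneg _)
    rcases eq_or_ne (P k₁ - o) w with h1 | h1
    · have h2 : P k₂ - o ≠ w := fun h2 => hne (by
        have := h1.trans h2.symm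
        exact sub_left_injective this)
      refine Finset.sum_pos' hterm ⟨k₂, hk₂, ?_⟩
      have h3 : P k₂ - o - w ≠ 0 := sub_ne_zero.2 h2
      exact mul_pos (hω k₂ hk₂) (pow_pos (norm_pos_iff.2 h3) 2)
    · refine Finset.sum_pos' hterm ⟨k₁, hk₁, ?_⟩
      have h3 : P k₁ - o - w ≠ 0 := sub_ne_zero.2 h1
      exact mul_pos (hω k₁ hk₁) (pow_pos (norm_pos_iff.2 h3) 2)
  have : ‖w‖ ^ 2 < r ^ 2 := by nlinarith
  nlinarith [norm_nonneg w]

/-- For a well-centered simplex, the orthogonal projection of a vertex onto the affine span of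
the opposite facet lies strictly inside the circumsphere of that facet. -/
lemma dist_proj_lt_circumradius {m : ℕ} (s : Affine.Simplex ℝ E (m + 2))
    (hwc : s.IsWellCentered) (l : Fin (m + 3)) :
    dist (((s.facetOpposite l).orthogonalProjectionSpan (s.points l)) : E)
      (s.facetOpposite l).circumcenter < (s.facetOpposite l).circumradius := by
  classical
  obtain ⟨w, hw1, hwpos, hwcomb⟩ := hwc
  set f := s.facetOpposite l with hf
  set H := affineSpan ℝ (Set.range f.points) with hH
  set o : E := f.circumcenter with ho
  set r : ℝ := f.circumradius with hrdef
  set v : E := s.points l with hv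
  set q : E := ↑(f.orthogonalProjectionSpan v) with hq
  set c : E := s.circumcenter with hc
  set R : ℝ := s.circumradius with hR
  set b : ℝ := w l with hb
  have hr0 : 0 ≤ r := f.circumradius_nonneg
  have hrange : Set.range f.points = s.points '' ↑({l}ᶜ : Finset (Fin (m + 3))) :=
    s.range_face_points _
  have hmemH : ∀ m', m' ≠ l → s.points m' ∈ H := by
    intro m' hm'
    apply subset_affineSpan
    rw [hrange]
    exact Set.mem_image_of_mem _ (by simp [hm'])
  have hdistfacet : ∀ m', m' ≠ l → dist (s.points m') o = r := by
    intro m' hm'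
    have hmem : s.points m' ∈ Set.range f.points := by
      rw [hrange]; exact Set.mem_image_of_mem _ (by simp [hm'])
    obtain ⟨k, hk⟩ := hmem
    rw [← hk]; exact f.dist_circumcenter_eq_circumradius k
  have hoH : o ∈ H := f.circumcenter_mem_affineSpan
  have hqH : q ∈ H := (f.orthogonalProjectionSpan v).2
  -- the composed projection map
  set g : E →ᵃ[ℝ] E := (AffineSubspace.subtype H).comp f.orthogonalProjectionSpan with hg
  have hgdef : ∀ x : E, g x = ↑(f.orthogonalProjectionSpan x) := fun _ => rfl
  have hgspan : ∀ x ∈ H, g x = x := fun x hx =>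
    EuclideanGeometry.orthogonalProjection_eq_self_iff.mpr hx
  have hgc : g c = o := s.orthogonalProjection_circumcenter _
  have hgv : g v = q := rfl
  -- c and o as sums
  have hcsum : c = ∑ m', w m' • s.points m' := by
    rw [← hwcomb, Finset.affineCombination_eq_linear_combination _ _ _ hw1]
  have hosum : o = ∑ m', w m' • g (s.points m') := by
    rw [← hgc, ← hwcomb, Finset.map_affineCombination _ _ _ hw1 g,
      Finset.affineCombination_eq_linear_combination _ _ _ hw1]
    rfl
  set z : E := v - q with hz
  have hxz : c - o = b • z := by
    rw [hcsum, hosum, ← Finset.sum_sub_distrib, Finset.sum_eq_single l]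
    · rw [← smul_sub]; rfl
    · intro m' _ hm'
      simp [hgspan _ (hmemH m' hm')]
    · intro h; exact absurd (Finset.mem_univ l) h
  -- z is nonzero
  have hvnotH : v ∉ H := by
    have hind := s.independent.notMem_affineSpan_diff l Set.univ
    have hset : (↑({l}ᶜ : Finset (Fin (m + 3))) : Set (Fin (m + 3))) = Set.univ \ {l} := by
      ext x; simp
    rw [hH, hrange, hset]
    exact hind
  have hzne : z ≠ 0 := by
    intro h0
    apply hvnotH
    have : v = q := by rwa [hz, sub_eq_zero] at h0
    rw [this]; exact hqH
  -- z is orthogonal to the direction of H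
  have hzperp : ∀ y ∈ H.direction, ⟪y, z⟫ = 0 := by
    intro y hy
    have h := EuclideanGeometry.orthogonalProjection_vsub_mem_direction_orthogonal H v
    have h2 := Submodule.neg_mem _ h
    have h3 : z ∈ H.directionᗮ := by
      simpa [vsub_eq_sub, neg_sub, hz, hq, Affine.Simplex.orthogonalProjectionSpan] using h2
    exact (Submodule.mem_orthogonal _ _).mp h3 y hy
  -- Pythagoras 1 : R² = r² + b²‖z‖²
  set Z : ℝ := ‖z‖ with hZ
  have hZpos : 0 < Z := norm_pos_iff.mpr hzne
  -- a vertex of the facet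
  obtain ⟨k0, hk0mem, hk0⟩ : ∃ k ∈ ({l}ᶜ : Finset (Fin (m + 3))), s.points k = f.points 0 := by
    have hmem : f.points 0 ∈ Set.range f.points := Set.mem_range_self 0
    rw [hrange] at hmem
    obtain ⟨k, hk1, hk2⟩ := hmem
    exact ⟨k, hk1, hk2⟩
  have hk0l : k0 ≠ l := by simpa using hk0mem
  have hpyth1 : R ^ 2 = r ^ 2 + (b * Z) ^ 2 := by
    have h := f.dist_sq_eq_dist_orthogonalProjection_sq_add_dist_orthogonalProjection_sq
      (p₁ := f.points 0) c (subset_affineSpan ℝ _ (Set.mem_range_self 0))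
    have hd1 : dist (f.points 0) c = R := by
      rw [← hk0]; exact s.dist_circumcenter_eq_circumradius _
    have hoc : (↑(f.orthogonalProjectionSpan c) : E) = o := hgc
    have hd2 : dist (f.points 0) (↑(f.orthogonalProjectionSpan c) : E) = r := by
      rw [hoc, ← hk0]
      exact hdistfacet _ hk0l
    have hd3 : dist c (↑(f.orthogonalProjectionSpan c) : E) = b * Z := by
      rw [hoc, dist_eq_norm, hxz, norm_smul, Real.norm_eq_abs, abs_of_pos (hwpos l), hZ]
    rw [hd1, hd2, hd3] at h
    rw [sq, sq, sq]
    exact h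
  -- Pythagoras 2
  set D : ℝ := dist q o with hD
  have hD0 : 0 ≤ D := dist_nonneg
  have hDoq : D = ‖o - q‖ := by rw [hD, dist_eq_norm, ← norm_neg]; congr 1; abel
  have hcv : c - v = (o - q) + (b - 1) • z := by
    have h1 : c - v = (c - o) + (o - q) - (v - q) := by abel
    rw [h1, hxz, ← hz, sub_smul, one_smul]
    abel
  have hperp2 : ⟪o - q, (b - 1) • z⟫ = 0 := by
    rw [real_inner_smul_right]
    have : o - q ∈ H.direction := by
      have := AffineSubspace.vsub_mem_direction hoH hqH
      rwa [vsub_eq_sub] at this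
    rw [hzperp _ this, mul_zero]
  have hpyth2 : R ^ 2 = D ^ 2 + ((b - 1) * Z) ^ 2 := by
    have hdvc : dist v c = R := s.dist_circumcenter_eq_circumradius l
    have hn : ‖c - v‖ = R := by
      rw [← dist_eq_norm, dist_comm]; exact hdvc
    have hexp : ‖(o - q) + (b - 1) • z‖ ^ 2 = ‖o - q‖ ^ 2 + ‖(b - 1) • z‖ ^ 2 := by
      rw [norm_add_sq_real, hperp2]; ring
    have hns : ‖(b - 1) • z‖ = |b - 1| * Z := by rw [norm_smul, Real.norm_eq_abs, hZ]
    have h2 : R ^ 2 = D ^ 2 + (|b - 1| * Z) ^ 2 := by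
      rw [← hn, hcv, hexp, hns, hDoq]
    have habs : (|b - 1| * Z) ^ 2 = ((b - 1) * Z) ^ 2 := by
      rw [mul_pow, mul_pow, sq_abs]
    rw [h2, habs]
  have hkey : D ^ 2 = r ^ 2 + (2 * b - 1) * Z ^ 2 := by linear_combination hpyth1 - hpyth2
  -- b < 1
  have hb0 : 0 < b := hwpos l
  have hcard : 1 < (univ.erase l).card := by
    rw [Finset.card_erase_of_mem (Finset.mem_univ l), Finset.card_univ, Fintype.card_fin]
    omega
  have hsum_erase : ∑ k ∈ univ.erase l, w k = 1 - b := by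
    have h := Finset.add_sum_erase univ w (Finset.mem_univ l)
    rw [hw1] at h
    linarith [h]
  have hb1 : b < 1 := by
    obtain ⟨a, ha, a', ha', haa⟩ := Finset.one_lt_card.mp hcard
    have hpos : 0 < ∑ k ∈ univ.erase l, w k := by
      apply Finset.sum_pos (fun k _ => hwpos k) ⟨a, ha⟩
    linarith [hsum_erase, hpos]
  by_cases hbhalf : b < 1 / 2
  · -- then D² < r², done
    have hlt : D * D < r * r := by
      have hzz : 0 < Z ^ 2 := pow_pos hZpos 2
      have h1 : (2 * b - 1) * Z ^ 2 < 0 := mul_neg_of_neg_of_pos (by linarith) hzz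
      have h2 : D ^ 2 < r ^ 2 := by linarith [hkey]
      rw [sq, sq] at h2
      exact h2
    by_contra hcon
    push_neg at hcon
    have := mul_self_le_mul_self hr0 hcon
    linarith
  · exfalso
    push_neg at hbhalf
    have hb1' : (0:ℝ) < 1 - b := by linarith
    set y : E := ∑ k ∈ univ.erase l, (w k / (1 - b)) • s.points k with hy
    have hylt : ‖y - o‖ < r := by
      obtain ⟨a, ha, a', ha', haa⟩ := Finset.one_lt_card.mp hcard
      refine norm_sum_smul_sub_lt (fun k _ => div_pos (hwpos k) hb1') ?_
        (fun k hk => hdistfacet k (Finset.ne_of_mem_erase hk)) ha ha'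
        (s.independent.injective.ne haa)
      rw [← Finset.sum_div, hsum_erase, div_self (ne_of_gt hb1')]
    have hoy : o = b • q + (1 - b) • y := by
      have hsplit := (Finset.add_sum_erase univ (fun m' => w m' • g (s.points m'))
        (Finset.mem_univ l)).symm
      have hrest : ∑ k ∈ univ.erase l, w k • g (s.points k)
          = ∑ k ∈ univ.erase l, w k • s.points k := by
        apply Finset.sum_congr rfl
        intro k hk
        rw [hgspan _ (hmemH k (Finset.ne_of_mem_erase hk))]
      have hyrest : (1 - b) • y = ∑ k ∈ univ.erase l, w k • s.points k := by
        rw [hy, Finset.smul_sum]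
        apply Finset.sum_congr rfl
        intro k _
        rw [smul_smul, mul_div_cancel₀ _ (ne_of_gt hb1')]
      rw [hosum, hsplit, hrest, ← hyrest]
      rfl
    have hoq : o - q = (1 - b) • (y - q) := by
      rw [hoy]
      module
    have hDeq : D = (1 - b) * ‖y - q‖ := by
      rw [hDoq, hoq, norm_smul, Real.norm_eq_abs, abs_of_pos hb1']
    have htri : ‖y - q‖ ≤ ‖y - o‖ + D := by
      have : y - q = (y - o) + (o - q) := by abel
      rw [this, hDoq]
      exact norm_add_le _ _
    have hge : r * r ≤ D * D := by
      have hnn : 0 ≤ (2 * b - 1) * Z ^ 2 :=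
        mul_nonneg (by linarith) (le_of_lt (pow_pos hZpos 2))
      have h2 : r ^ 2 ≤ D ^ 2 := by linarith [hkey]
      rw [sq, sq] at h2
      exact h2
    have hDger : r ≤ D := by
      by_contra hcon
      push_neg at hcon
      have := mul_self_lt_mul_self hD0 hcon
      linarith
    have h1 : D ≤ (1 - b) * ‖y - o‖ + (1 - b) * D := by
      calc D = (1 - b) * ‖y - q‖ := hDeq
        _ ≤ (1 - b) * (‖y - o‖ + D) := mul_le_mul_of_nonneg_left htri (le_of_lt hb1')
        _ = (1 - b) * ‖y - o‖ + (1 - b) * D := by ring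
    have hid : D = b * D + (1 - b) * D := by ring
    have h2 : b * D ≤ (1 - b) * ‖y - o‖ := by linarith [h1, hid]
    have h3 : (1 - b) * ‖y - o‖ < (1 - b) * r := mul_lt_mul_of_pos_left hylt hb1'
    have h4 : (1 - b) * r ≤ b * r := mul_le_mul_of_nonneg_right (by linarith) hr0
    have h5 : b * D < b * r := lt_of_le_of_lt h2 (lt_of_lt_of_le h3 h4)
    have h6 : D < r := lt_of_mul_lt_mul_left h5 (le_of_lt hb0)
    linarith

section Main

/-- Helper: compute the vertex set of the facet of the cone `σi` opposite the vertex
indexed by `mj.succ`. -/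
lemma cone_facet_range {n : ℕ} (σ : Affine.Simplex ℝ E (n + 2)) (u : E)
    (i j : Fin (n + 3)) (hij : i ≠ j)
    (σi : Affine.Simplex ℝ E (n + 2)) (hσi : σi.points = Fin.cons u (σ.facetOpposite i).points)
    (hcard : #({i}ᶜ : Finset (Fin (n + 3))) = n + 2)
    (mj : Fin (n + 2)) (hmj : ({i}ᶜ : Finset (Fin (n + 3))).orderEmbOfFin hcard mj = j) :
    Set.range (σi.facetOpposite mj.succ).points
      = {u} ∪ σ.points '' {x : Fin (n + 3) | x ≠ i ∧ x ≠ j} := by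
  classical
  set embi := ({i}ᶜ : Finset (Fin (n + 3))).orderEmbOfFin hcard with hembi
  have hrange : Set.range (σi.facetOpposite mj.succ).points
      = σi.points '' ↑({mj.succ}ᶜ : Finset (Fin (n + 3))) := σi.range_face_points _
  have hembirange : ∀ k : Fin (n + 2), embi k ≠ i := by
    intro k
    have h := Finset.orderEmbOfFin_mem ({i}ᶜ : Finset (Fin (n + 3))) hcard k
    rw [Finset.mem_compl, Finset.mem_singleton] at h
    exact h
  rw [hrange, hσi]
  ext x
  constructor
  · rintro ⟨y, hy, rfl⟩
    have hy' : y ≠ mj.succ := by simpa using hy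
    induction y using Fin.cases with
    | zero => exact Or.inl (by simp [Fin.cons_zero])
    | succ k =>
      refine Or.inr ⟨embi k, ⟨hembirange k, ?_⟩, ?_⟩
      · intro hk
        apply hy'
        have : embi k = embi mj := by rw [hmj, hk]
        rw [embi.injective this]
      · simp [Fin.cons_succ]
        rfl
  · rintro (hx | ⟨k', ⟨hk'i, hk'j⟩, rfl⟩)
    · refine ⟨0, ?_, ?_⟩
      · simp [(Fin.succ_ne_zero mj).symm]
      · simp only [Set.mem_singleton_iff] at hx
        simp [Fin.cons_zero, hx]
    · have hk'mem : k' ∈ ({i}ᶜ : Finset (Fin (n + 3))) := by simpa using hk'i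
      have : k' ∈ Set.range embi := by rw [hembi, Finset.range_orderEmbOfFin]; exact hk'mem
      obtain ⟨m', hm'⟩ := this
      refine ⟨m'.succ, ?_, ?_⟩
      · simp only [Finset.coe_compl, Finset.coe_singleton, Set.mem_compl_iff,
          Set.mem_singleton_iff]
        intro hcontra
        have : m' = mj := Fin.succ_injective _ hcontra
        rw [this, hmj] at hm'
        exact hk'j hm'.symm
      · simp only [Fin.cons_succ]
        show σ.points (embi m') = σ.points k'
        rw [hm']

/-- An affine combination with weights supported on `{k}ᶜ` lies in the affine span of the
facet opposite `k`. -/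
lemma mem_facet_span_of_weight_zero {n : ℕ} (σ : Affine.Simplex ℝ E (n + 2))
    (t : Fin (n + 3) → ℝ) (htsum : ∑ m, t m = 1)
    (k : Fin (n + 3)) (hk : t k = 0) :
    Finset.univ.affineCombination ℝ σ.points t
      ∈ affineSpan ℝ (Set.range (σ.facetOpposite k).points) := by
  classical
  have hcard : #({k}ᶜ : Finset (Fin (n + 3))) = n + 2 := by simp [Finset.card_compl]
  set embk := ({k}ᶜ : Finset (Fin (n + 3))).orderEmbOfFin hcard with hembk
  have hind : Set.indicator (↑({k}ᶜ : Finset (Fin (n + 3)))) t = t := by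
    funext m'
    by_cases hm : m' = k
    · subst hm; simp [hk]
    · simp [Set.indicator, hm]
  have hcomb2 : (({k}ᶜ : Finset (Fin (n + 3)))).affineCombination ℝ σ.points t
      = Finset.univ.affineCombination ℝ σ.points t := by
    rw [Finset.affineCombination_indicator_subset t σ.points (Finset.subset_univ _), hind]
  have hmap : Finset.univ.map embk.toEmbedding = ({k}ᶜ : Finset (Fin (n + 3))) := by
    ext x
    simp only [Finset.mem_map, Finset.mem_univ, true_and, RelEmbedding.coe_toEmbedding]
    constructor
    · rintro ⟨y, rfl⟩
      exact Finset.orderEmbOfFin_mem _ _ _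
    · intro hx
      have hx' : x ∈ Set.range embk := by rw [hembk, Finset.range_orderEmbOfFin]; exact hx
      obtain ⟨y, hy⟩ := hx'
      exact ⟨y, hy⟩
  have hsum2 : ∑ m' ∈ Finset.univ.map embk.toEmbedding, t m' = 1 := by
    rw [hmap, ← htsum]
    apply Finset.sum_subset (Finset.subset_univ _)
    intro x _ hx
    have : x = k := by simpa using hx
    rwa [this]
  have hsum3 : ∑ m', (t ∘ embk) m' = 1 := by
    rw [← hsum2, Finset.sum_map]
    rfl
  have hcomb3 : Finset.univ.affineCombination ℝ ((σ.facetOpposite k).points) (t ∘ embk)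
      = Finset.univ.affineCombination ℝ σ.points t := by
    rw [← hcomb2, ← hmap, Finset.affineCombination_map]
    rfl
  rw [← hcomb3]
  exact affineCombination_mem_affineSpan hsum3 _

/-- For `n ≥ 2`, if `u` is a point of an `n`-simplex `σ`, then no two of the cones of
`u` over the facets of `σ` are both `n`-well-centered. -/
theorem not_both_cones_over_facets_isWellCentered
    {n : ℕ} (σ : Affine.Simplex ℝ E (n + 2)) (u : E)
    (hu : u ∈ convexHull ℝ (Set.range σ.points))
    (i j : Fin (n + 3)) (hij : i ≠ j)
    (hi : u ∉ affineSpan ℝ (Set.range (σ.facetOpposite i).points))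
    (hj : u ∉ affineSpan ℝ (Set.range (σ.facetOpposite j).points))
    (σi : Affine.Simplex ℝ E (n + 2)) (hσi : σi.points = Fin.cons u (σ.facetOpposite i).points)
    (σj : Affine.Simplex ℝ E (n + 2)) (hσj : σj.points = Fin.cons u (σ.facetOpposite j).points) :
    ¬(σi.IsWellCentered ∧ σj.IsWellCentered) := by
  classical
  rintro ⟨hWi, hWj⟩
  -- extract convex weights for u
  rw [convexHull_range_eq_exists_affineCombination] at hu
  obtain ⟨S, t0, ht0, hts, htu⟩ := hu
  set t : Fin (n + 3) → ℝ := Set.indicator ↑S t0 with ht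
  have htnn : ∀ m, 0 ≤ t m := by
    intro m
    by_cases h : m ∈ (S : Set (Fin (n + 3)))
    · rw [ht]; simp only [Set.indicator_apply, if_pos h]; exact ht0 m h
    · rw [ht]; simp only [Set.indicator_apply, if_neg h]; exact le_refl 0
  have htsum : ∑ m, t m = 1 := by
    rw [ht, ← Finset.sum_indicator_subset t0 (Finset.subset_univ S)] at *
    exact hts
  have htcomb : Finset.univ.affineCombination ℝ σ.points t = u := by
    rw [ht, ← Finset.affineCombination_indicator_subset t0 σ.points (Finset.subset_univ S)]
    exact htu
  -- positive weight at i and j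
  have hti : 0 < t i := by
    rcases lt_or_eq_of_le (htnn i) with h | h
    · exact h
    · exfalso
      apply hi
      rw [← htcomb]
      exact mem_facet_span_of_weight_zero σ t htsum i h.symm
  have htj : 0 < t j := by
    rcases lt_or_eq_of_le (htnn j) with h | h
    · exact h
    · exfalso
      apply hj
      rw [← htcomb]
      exact mem_facet_span_of_weight_zero σ t htsum j h.symm
  -- indices of j in σi and i in σj
  have hcardi : #({i}ᶜ : Finset (Fin (n + 3))) = n + 2 := by simp [Finset.card_compl]
  have hcardj : #({j}ᶜ : Finset (Fin (n + 3))) = n + 2 := by simp [Finset.card_compl]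
  obtain ⟨mj, hmj⟩ : ∃ mj, ({i}ᶜ : Finset (Fin (n + 3))).orderEmbOfFin hcardi mj = j := by
    have hjmem : j ∈ ({i}ᶜ : Finset (Fin (n + 3))) := by
      rw [Finset.mem_compl, Finset.mem_singleton]; exact fun h => hij h.symm
    have : j ∈ Set.range (({i}ᶜ : Finset (Fin (n + 3))).orderEmbOfFin hcardi) := by
      rw [Finset.range_orderEmbOfFin]; exact hjmem
    exact this
  obtain ⟨mi, hmi⟩ : ∃ mi, ({j}ᶜ : Finset (Fin (n + 3))).orderEmbOfFin hcardj mi = i := by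
    have himem : i ∈ ({j}ᶜ : Finset (Fin (n + 3))) := by
      rw [Finset.mem_compl, Finset.mem_singleton]; exact hij
    have : i ∈ Set.range (({j}ᶜ : Finset (Fin (n + 3))).orderEmbOfFin hcardj) := by
      rw [Finset.range_orderEmbOfFin]; exact himem
    exact this
  -- the shared facet ρ and its primed copy
  set ρ := σi.facetOpposite mj.succ with hρ
  set ρ' := σj.facetOpposite mi.succ with hρ'
  have hσij : σi.points mj.succ = σ.points j := by
    rw [hσi, Fin.cons_succ]
    show σ.points (({i}ᶜ : Finset (Fin (n + 3))).orderEmbOfFin _ mj) = σ.points j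
    rw [hmj]
  have hσji : σj.points mi.succ = σ.points i := by
    rw [hσj, Fin.cons_succ]
    show σ.points (({j}ᶜ : Finset (Fin (n + 3))).orderEmbOfFin _ mi) = σ.points i
    rw [hmi]
  have hrangei : Set.range ρ.points = {u} ∪ σ.points '' {x : Fin (n + 3) | x ≠ i ∧ x ≠ j} :=
    cone_facet_range σ u i j hij σi hσi hcardi mj hmj
  have hrangej : Set.range ρ'.points = {u} ∪ σ.points '' {x : Fin (n + 3) | x ≠ j ∧ x ≠ i} :=
    cone_facet_range σ u j i hij.symm σj hσj hcardj mi hmi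
  have hsetcomm : {x : Fin (n + 3) | x ≠ j ∧ x ≠ i} = {x : Fin (n + 3) | x ≠ i ∧ x ≠ j} := by
    ext x; exact and_comm
  have hrangeeq : Set.range ρ'.points = Set.range ρ.points := by
    rw [hrangei, hrangej, hsetcomm]
  have hspaneq : affineSpan ℝ (Set.range ρ'.points) = affineSpan ℝ (Set.range ρ.points) := by
    rw [hrangeeq]
  -- transfer circumcenter/radius
  have hcc : ρ'.circumcenter = ρ.circumcenter :=
    Affine.Simplex.circumcenter_eq_of_range_eq hrangeeq
  have hcr : ρ'.circumradius = ρ.circumradius := by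
    have h0 : ρ'.points 0 ∈ Set.range ρ.points := by
      rw [← hrangeeq]; exact Set.mem_range_self _
    obtain ⟨k, hk⟩ := h0
    rw [← ρ'.dist_circumcenter_eq_circumradius 0, hcc, ← hk,
      ρ.dist_circumcenter_eq_circumradius k]
  set o : E := ρ.circumcenter with ho
  set r : ℝ := ρ.circumradius with hrr
  -- distances of the relevant projections
  have hkeyj' : dist (↑(ρ.orthogonalProjectionSpan (σ.points j)) : E) o < r := by
    have h := dist_proj_lt_circumradius σi hWi mj.succ
    rwa [hσij] at h
  have hkeyi' : dist (↑(ρ.orthogonalProjectionSpan (σ.points i)) : E) o < r := by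
    have h := dist_proj_lt_circumradius σj hWj mi.succ
    rw [hσji] at h
    have hproj : (↑(ρ'.orthogonalProjectionSpan (σ.points i)) : E)
        = ↑(ρ.orthogonalProjectionSpan (σ.points i)) := proj_congr hspaneq _
    rwa [hproj, hcc, hcr] at h
  -- u and the other vertices lie on the circumsphere of ρ
  have humem : u ∈ Set.range ρ.points := by rw [hrangei]; exact Or.inl rfl
  have hudist : dist u o = r := by
    obtain ⟨k, hk⟩ := humem
    rw [← hk, ρ.dist_circumcenter_eq_circumradius k]
  have hvdist : ∀ m, m ≠ i → m ≠ j → dist (σ.points m) o = r := by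
    intro m hmi' hmj'
    have : σ.points m ∈ Set.range ρ.points := by
      rw [hrangei]; exact Or.inr ⟨m, ⟨hmi', hmj'⟩, rfl⟩
    obtain ⟨k, hk⟩ := this
    rw [← hk, ρ.dist_circumcenter_eq_circumradius k]
  have hvmemspan : ∀ m, m ≠ i → m ≠ j →
      σ.points m ∈ affineSpan ℝ (Set.range ρ.points) := by
    intro m hmi' hmj'
    apply subset_affineSpan
    rw [hrangei]; exact Or.inr ⟨m, ⟨hmi', hmj'⟩, rfl⟩
  -- the projection map
  set g : E →ᵃ[ℝ] E :=
    (AffineSubspace.subtype (affineSpan ℝ (Set.range ρ.points))).comp ρ.orthogonalProjectionSpan with hg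
  have hgdef : ∀ x : E, g x = ↑(ρ.orthogonalProjectionSpan x) := fun _ => rfl
  have hgspan : ∀ x ∈ affineSpan ℝ (Set.range ρ.points), g x = x := fun x hx =>
    EuclideanGeometry.orthogonalProjection_eq_self_iff.mpr hx
  have hgu : g u = u := hgspan u (subset_affineSpan ℝ _ humem)
  -- u as a combination of projections
  set X : Fin (n + 3) → E := fun m => g (σ.points m) with hX
  have hucomb : u = ∑ m, t m • X m := by
    rw [← hgu, ← htcomb, Finset.map_affineCombination _ _ _ htsum g,
      Finset.affineCombination_eq_linear_combination _ _ _ htsum]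
    rfl
  have husub : u - o = ∑ m, t m • (X m - o) := by
    rw [← sum_smul_sub_eq Finset.univ X t o htsum, ← hucomb]
  -- all projections are within distance r, strictly at i
  have hXle : ∀ m, ‖X m - o‖ ≤ r := by
    intro m
    by_cases hmi' : m = i
    · subst hmi'
      rw [← dist_eq_norm]
      exact le_of_lt hkeyi'
    by_cases hmj' : m = j
    · subst hmj'
      rw [← dist_eq_norm]
      exact le_of_lt hkeyj'
    · have hgm : g (σ.points m) = σ.points m := hgspan _ (hvmemspan m hmi' hmj')
      show ‖g (σ.points m) - o‖ ≤ r
      rw [hgm, ← dist_eq_norm]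
      exact le_of_eq (hvdist m hmi' hmj')
  have hXi : ‖X i - o‖ < r := by
    rw [hX, ← dist_eq_norm]
    exact hkeyi'
  -- final contradiction
  have hle : ‖u - o‖ ≤ ∑ m, t m * ‖X m - o‖ := by
    rw [husub]
    refine (norm_sum_le _ _).trans (le_of_eq ?_)
    apply Finset.sum_congr rfl
    intro m _
    rw [norm_smul, Real.norm_eq_abs, abs_of_nonneg (htnn m)]
  have hstrict : ∑ m, t m * ‖X m - o‖ < ∑ m, t m * r := by
    apply Finset.sum_lt_sum
    · intro k _
      exact mul_le_mul_of_nonneg_left (hXle k) (htnn k)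
    · exact ⟨i, Finset.mem_univ i, mul_lt_mul_of_pos_left hXi hti⟩
  have hsumr : ∑ m, t m * r = r := by rw [← Finset.sum_mul, htsum, one_mul]
  have hur : ‖u - o‖ = r := by rw [← dist_eq_norm]; exact hudist
  rw [hur] at hle
  rw [hsumr] at hstrict
  linarith

end Main
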